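/- Let β : E₁ × ⋯ × E_k → F be a k-linear map between topological vector spaces that is c-hypocontinuous in its arguments (j, …, k) for some j ∈ {2, …, k}, let X be a k_ℝ-space, and let f : X → E₁ × ⋯ × E_k be continuous. Then β ∘ f : X → F is continuous. -/

import Mathlib

open Filter Topology
open Set Pointwise

theorem aux_sum_mem_nhds {F : Type*} [AddCommGroup F] [TopologicalSpace F]
    [IsTopologicalAddGroup F] {ι : Type*} [DecidableEq ι] (s : Finset ι) {W : Set F}
    (hW : W ∈ 𝓝 0) :
    ∃ W₀ ∈ 𝓝 (0 : F), ∀ g : ι → F, (∀ i ∈ s, g i ∈ W₀) → ∑ i ∈ s, g i ∈ W := by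
  induction s using Finset.induction_on generalizing W with
  | empty => exact ⟨W, hW, fun g _ => by simpa using mem_of_mem_nhds hW⟩
  | @insert a s ha ih =>
    obtain ⟨U, hUo, hU0, hUW⟩ := exists_open_nhds_zero_add_subset hW
    have hUn : U ∈ 𝓝 (0 : F) := hUo.mem_nhds hU0
    obtain ⟨W₀, hW₀, hs⟩ := ih hUn
    refine ⟨W₀ ∩ U, inter_mem hW₀ hUn, fun g hg => ?_⟩
    rw [Finset.sum_insert ha]
    exact hUW (Set.add_mem_add (hg a (Finset.mem_insert_self a s)).2
      (hs g fun i hi => (hg i (Finset.mem_insert_of_mem hi)).1))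

theorem aux_pi_nhds {ι : Type*} [Fintype ι] {G : ι → Type*} [∀ i, TopologicalSpace (G i)]
    {x : ∀ i, G i} {V : Set (∀ i, G i)} (hV : V ∈ 𝓝 x) :
    ∃ v : ∀ i, Set (G i), (∀ i, v i ∈ 𝓝 (x i)) ∧ Set.pi Set.univ v ⊆ V := by
  rw [nhds_pi, Filter.mem_pi'] at hV
  obtain ⟨I, t, ht, hsub⟩ := hV
  exact ⟨t, ht, fun y hy => hsub fun i _ => hy i (Set.mem_univ i)⟩

theorem aux_scale {k : ℕ} {E : Fin k → Type*} [∀ i, AddCommGroup (E i)] [∀ i, Module ℝ (E i)]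
    {F : Type*} [AddCommGroup F] [Module ℝ F] (β : MultilinearMap ℝ E F)
    (u : Finset (Fin k)) (t : ℝ) (x : ∀ i, E i) :
    β (fun i => if i ∈ u then t • x i else x i) = t ^ u.card • β x := by
  induction u using Finset.induction_on with
  | empty => simp
  | @insert a u ha ih =>
    have h1 : (fun i => if i ∈ insert a u then t • x i else x i)
        = Function.update (fun i => if i ∈ u then t • x i else x i) a (t • x a) := by
      funext i
      rcases eq_or_ne i a with rfl | hia
      · simp [ha]
      · simp [Function.update_of_ne hia, hia]
    have h2 : Function.update (fun i => if i ∈ u then t • x i else x i) a (x a)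
        = (fun i => if i ∈ u then t • x i else x i) := by
      funext i
      rcases eq_or_ne i a with rfl | hia
      · simp [ha]
      · simp [Function.update_of_ne hia]
    rw [h1, β.map_update_smul, h2, ih, Finset.card_insert_of_notMem ha, pow_succ', mul_smul]

theorem aux_kr {X : Type*} [TopologicalSpace X] {F : Type*} [AddCommGroup F] [Module ℝ F]
    [TopologicalSpace F] [IsTopologicalAddGroup F] [ContinuousSMul ℝ F] [LocallyConvexSpace ℝ F]
    (hX : ∀ f : X → ℝ, (∀ K : Set X, IsCompact K → ContinuousOn f K) → Continuous f)
    {g : X → F} (hg : ∀ K : Set X, IsCompact K → ContinuousOn g K) :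
    Continuous g := by
  rw [continuous_iff_continuousAt]
  intro x₀
  rw [ContinuousAt, Filter.tendsto_def]
  intro U hU
  have hT : (fun z : F => z + g x₀) ⁻¹' U ∈ 𝓝 (0 : F) := by
    apply (continuous_id.add continuous_const).continuousAt.preimage_mem_nhds
    simpa using hU
  obtain ⟨C, ⟨hCn, hCc⟩, hCsub⟩ := (LocallyConvexSpace.convex_basis_zero ℝ F).mem_iff.1 hT
  have hψc : Continuous fun x => gauge C (g x - g x₀) := by
    apply hX
    intro K hK
    exact (continuous_gauge hCc hCn).comp_continuousOn ((hg K hK).sub continuousOn_const)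
  have hmem : (fun x => gauge C (g x - g x₀)) ⁻¹' (Set.Iio 1) ∈ 𝓝 x₀ := by
    apply hψc.continuousAt.preimage_mem_nhds
    simp only [sub_self, gauge_zero]
    exact Iio_mem_nhds one_pos
  apply mem_of_superset hmem
  intro x hx
  have h1 : g x - g x₀ ∈ C :=
    gauge_lt_one_subset_self hCc (mem_of_mem_nhds hCn) (absorbent_nhds_zero hCn) hx
  have h2 := hCsub h1
  simpa using h2

/-- A Hausdorff topological space `X` is a `k_ℝ`-space if every real-valued function
on `X` that is continuous on all compact subsets is continuous. -/
def IsKRSpace (X : Type*) [TopologicalSpace X] : Prop :=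
  ∀ f : X → ℝ, (∀ K : Set X, IsCompact K → ContinuousOn f K) → Continuous f

/-- Splicing a tuple indexed by `{i // i < m}` and a tuple indexed by `{i // ¬ i < m}`
into a full tuple indexed by `Fin k`. -/
def splice {k m : ℕ} {E : Fin k → Type*}
    (a : ∀ i : {i : Fin k // (i : ℕ) < m}, E i.1)
    (b : ∀ i : {i : Fin k // ¬ (i : ℕ) < m}, E i.1) (i : Fin k) : E i :=
  if h : (i : ℕ) < m then a ⟨i, h⟩ else b ⟨i, h⟩

/-- Let `β : E₁ × ⋯ × E_k → F` be a `k`-linear map (`k ≥ 2`) between topological vector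
spaces which is separately continuous, continuous in the variables `(j,…,k)` for fixed
first `j−1` variables, and `c`-hypocontinuous in its arguments `(j,…,k)` for some
`j ∈ {2,…,k}`.  If `X` is a `k_ℝ`-space and `f : X → E₁ × ⋯ × E_k` is continuous, then
`β ∘ f` is continuous. -/
theorem continuous_multilinear_comp_of_c_hypocontinuous {k : ℕ} (hk : 2 ≤ k)
    {E : Fin k → Type*} [∀ i, AddCommGroup (E i)] [∀ i, Module ℝ (E i)]
    [∀ i, TopologicalSpace (E i)] [∀ i, IsTopologicalAddGroup (E i)]
    [∀ i, ContinuousSMul ℝ (E i)]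
    {F : Type*} [AddCommGroup F] [Module ℝ F] [TopologicalSpace F]
    [IsTopologicalAddGroup F] [ContinuousSMul ℝ F] [LocallyConvexSpace ℝ F]
    (β : MultilinearMap ℝ E F) (j : ℕ) (hj2 : 2 ≤ j) (hjk : j ≤ k)
    (hsep : ∀ (i : Fin k) (x : ∀ i, E i), Continuous fun y : E i => β (Function.update x i y))
    (htail : ∀ a : ∀ i : {i : Fin k // (i : ℕ) < j - 1}, E i.1,
      Continuous fun b : ∀ i : {i : Fin k // ¬ (i : ℕ) < j - 1}, E i.1 => β (splice a b))
    (hhypo : ∀ M : Set (∀ i : {i : Fin k // ¬ (i : ℕ) < j - 1}, E i.1), IsCompact M →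
      ∀ W ∈ 𝓝 (0 : F), ∃ V ∈ 𝓝 (0 : ∀ i : {i : Fin k // (i : ℕ) < j - 1}, E i.1),
        ∀ a ∈ V, ∀ b ∈ M, β (splice a b) ∈ W)
    {X : Type*} [TopologicalSpace X] [T2Space X] (hX : IsKRSpace X)
    (f : X → ∀ i, E i) (hf : Continuous f) :
    Continuous fun x => β (f x) := by
  classical
  let a : X → ∀ i : {i : Fin k // (i : ℕ) < j - 1}, E i.1 := fun x l => f x l.1
  let b : X → ∀ i : {i : Fin k // ¬ (i : ℕ) < j - 1}, E i.1 := fun x l => f x l.1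
  have ha : Continuous a := continuous_pi fun l => (continuous_apply l.1).comp hf
  have hb : Continuous b := continuous_pi fun l => (continuous_apply l.1).comp hf
  apply aux_kr hX
  intro K hK x₀ hx₀
  set a₀ := a x₀ with ha₀def
  have hMc : IsCompact (b '' K) := hK.image hb
  set tset : Finset (Fin k) := Finset.univ.filter (fun i => (i : ℕ) < j - 1) with htset
  set c : X → Finset (Fin k) → ∀ l : {i : Fin k // (i : ℕ) < j - 1}, E l.1 :=
    fun x s l => if (l : Fin k) ∈ s then a x l - a₀ l else a₀ l with hc
  set g₁ : X → F := fun x => β (splice a₀ (b x)) with hg₁def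
  have hg₁ : Continuous g₁ := (htail a₀).comp hb
  set rest : X → F := fun x => ∑ s ∈ tset.powerset.erase ∅, β (splice (c x s) (b x))
    with hrestdef
  -- the multilinear expansion
  have hexp : ∀ x, β (f x) = g₁ x + rest x := by
    intro x
    have key := β.map_piecewise_add (splice (fun l => a x l - a₀ l) (b x))
      (splice a₀ (b x)) tset
    have hL : tset.piecewise
        (splice (fun l => a x l - a₀ l) (b x) + splice a₀ (b x)) (splice a₀ (b x)) = f x := by
      funext i
      by_cases hp : (i : ℕ) < j - 1
      · have hmem : i ∈ tset := Finset.mem_filter.2 ⟨Finset.mem_univ _, hp⟩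
        rw [Finset.piecewise_eq_of_mem _ _ _ hmem]
        show splice (fun l => a x l - a₀ l) (b x) i + splice a₀ (b x) i = f x i
        rw [splice, splice, dif_pos hp, dif_pos hp]
        show a x ⟨i, hp⟩ - a₀ ⟨i, hp⟩ + a₀ ⟨i, hp⟩ = f x i
        rw [sub_add_cancel]
      · have hmem : i ∉ tset := fun h => hp (Finset.mem_filter.1 h).2
        rw [Finset.piecewise_eq_of_notMem _ _ _ hmem, splice, dif_neg hp]
    have hR : ∀ s ∈ tset.powerset,
        s.piecewise (splice (fun l => a x l - a₀ l) (b x)) (splice a₀ (b x))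
          = splice (c x s) (b x) := by
      intro s hs
      funext i
      by_cases his : i ∈ s
      · have hp : (i : ℕ) < j - 1 :=
          (Finset.mem_filter.1 (Finset.mem_powerset.1 hs his)).2
        rw [Finset.piecewise_eq_of_mem _ _ _ his]
        show splice (fun l => a x l - a₀ l) (b x) i = splice (c x s) (b x) i
        rw [splice, splice, dif_pos hp, dif_pos hp, hc]
        simp [his]
      · rw [Finset.piecewise_eq_of_notMem _ _ _ his]
        show splice a₀ (b x) i = splice (c x s) (b x) i
        by_cases hp : (i : ℕ) < j - 1
        · rw [splice, splice, dif_pos hp, dif_pos hp, hc]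
          simp [his]
        · rw [splice, splice, dif_neg hp, dif_neg hp]
    have key2 : β (f x) = ∑ s ∈ tset.powerset, β (splice (c x s) (b x)) := by
      rw [← hL, key]
      exact Finset.sum_congr rfl fun s hs => congrArg β (hR s hs)
    rw [key2, ← Finset.add_sum_erase _ _ (Finset.empty_mem_powerset tset)]
    congr 1
  -- rest vanishes at x₀
  have hrest0 : rest x₀ = 0 := by
    rw [hrestdef]
    apply Finset.sum_eq_zero
    intro s hs
    obtain ⟨hs0, hsp⟩ := Finset.mem_erase.1 hs
    obtain ⟨i, hi⟩ := Finset.nonempty_iff_ne_empty.2 hs0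
    have hp : (i : ℕ) < j - 1 := (Finset.mem_filter.1 (Finset.mem_powerset.1 hsp hi)).2
    apply β.map_coord_zero i
    show splice (c x₀ s) (b x₀) i = 0
    rw [splice, dif_pos hp, hc]
    simp [hi, ha₀def]
  -- rest tends to 0 along 𝓝[K] x₀
  have hrest : Tendsto rest (𝓝[K] x₀) (𝓝 0) := by
    rw [Filter.tendsto_def]
    intro W hW
    obtain ⟨W₀, hW₀, hWsum⟩ := aux_sum_mem_nhds (tset.powerset.erase ∅) hW
    obtain ⟨V, hV, hVW⟩ := hhypo (b '' K) hMc W₀ hW₀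
    obtain ⟨Vc, hVc, hVcV⟩ := aux_pi_nhds hV
    -- choose t₀
    obtain ⟨t₀, ht₀mem, ht₀p⟩ : ∃ t₀ : ℝ, (∀ l, t₀ • a₀ l ∈ Vc l) ∧ t₀ ∈ Set.Ioi (0:ℝ) := by
      have hts : ∀ᶠ t : ℝ in 𝓝 0, ∀ l, t • a₀ l ∈ Vc l := by
        rw [eventually_all]
        intro l
        have h1 : Tendsto (fun t : ℝ => t • a₀ l) (𝓝 0) (𝓝 ((0:ℝ) • a₀ l)) :=
          ((continuous_id.smul continuous_const).tendsto 0 : _)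
        rw [zero_smul] at h1
        exact h1 (hVc l)
      exact ((hts.filter_mono nhdsWithin_le_nhds).and (eventually_mem_nhdsWithin
        (s := Set.Ioi (0:ℝ)))).exists
    have ht₀pos : (0:ℝ) < t₀ := ht₀p
    have ht₀ne : t₀ ≠ 0 := ht₀pos.ne'
    -- refined neighborhoods
    set Vc' : ∀ l : {i : Fin k // (i : ℕ) < j - 1}, Set (E l.1) :=
      fun l => ⋂ q ∈ Finset.range (k + 1), (t₀ ^ q) • Vc l with hVc'def
    have hVc'n : ∀ l, Vc' l ∈ 𝓝 0 := by
      intro l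
      rw [hVc'def]
      refine (Filter.biInter_finset_mem _).2 fun q _ => ?_
      rw [set_smul_mem_nhds_zero_iff (pow_ne_zero q ht₀ne)]
      exact hVc l
    have hVc'sub : ∀ l q, q ≤ k → Vc' l ⊆ (t₀ ^ q) • Vc l := by
      intro l q hq
      exact Set.biInter_subset_of_mem (Finset.mem_range.2 (Nat.lt_succ_of_le hq))
    have hVc'sub0 : ∀ l, Vc' l ⊆ Vc l := by
      intro l y hy
      have h := hVc'sub l 0 (Nat.zero_le k) hy
      rwa [pow_zero, one_smul] at h
    -- eventual smallness
    have hdiff : Tendsto (fun x => a x - a₀) (𝓝[K] x₀) (𝓝 0) :=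
      tendsto_sub_nhds_zero_iff.2 ((ha.tendsto x₀).mono_left nhdsWithin_le_nhds)
    have hsmall : ∀ᶠ x in 𝓝[K] x₀, ∀ l, a x l - a₀ l ∈ Vc' l := by
      have hpimem : Set.pi Set.univ Vc' ∈ 𝓝 (0 : ∀ l : {i : Fin k // (i : ℕ) < j - 1}, E l.1) :=
        set_pi_mem_nhds Set.finite_univ (fun l _ => by simpa using hVc'n l)
      have h3 : ∀ᶠ x in 𝓝[K] x₀, (a x - a₀) ∈ Set.pi Set.univ Vc' := hdiff hpimem
      exact h3.mono fun x hx l => by simpa using hx l (Set.mem_univ l)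
    filter_upwards [hsmall, eventually_mem_nhdsWithin] with x hx hxK
    show rest x ∈ W
    rw [hrestdef]
    apply hWsum
    intro s hs
    obtain ⟨hs0, hsp'⟩ := Finset.mem_erase.1 hs
    have hsp : s ⊆ tset := Finset.mem_powerset.1 hsp'
    obtain ⟨i0f, hi0⟩ := Finset.nonempty_iff_ne_empty.2 hs0
    have hp0 : (i0f : ℕ) < j - 1 := (Finset.mem_filter.1 (hsp hi0)).2
    set i₀ : {i : Fin k // (i : ℕ) < j - 1} := ⟨i0f, hp0⟩ with hi₀def
    set r := (tset \ s).card with hrdef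
    have hrk : r ≤ k := by
      rw [hrdef]
      calc (tset \ s).card ≤ Finset.univ.card := Finset.card_le_univ _
        _ = k := by simp
    have htrne : t₀ ^ r ≠ 0 := pow_ne_zero r ht₀ne
    set d : ∀ l : {i : Fin k // (i : ℕ) < j - 1}, E l.1 := fun l =>
      if (l : Fin k) ∈ s then
        (if l = i₀ then (t₀ ^ r)⁻¹ • (a x l - a₀ l) else a x l - a₀ l)
      else a₀ l with hddef
    set Z : ∀ i, E i := splice d (b x) with hZdef
    set d' : ∀ l : {i : Fin k // (i : ℕ) < j - 1}, E l.1 := fun l =>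
      if (l : Fin k) ∈ s then
        (if l = i₀ then (t₀ ^ r)⁻¹ • (a x l - a₀ l) else a x l - a₀ l)
      else t₀ • a₀ l with hd'def
    have hZi0 : Z i0f = (t₀ ^ r)⁻¹ • (a x i₀ - a₀ i₀) := by
      rw [hZdef]
      show splice d (b x) i0f = _
      rw [splice, dif_pos hp0, hddef]
      simp [hi₀def, hi0]
      rfl
    have hid1 : splice (c x s) (b x)
        = Function.update Z i0f ((t₀ ^ r) • ((t₀ ^ r)⁻¹ • (a x i₀ - a₀ i₀))) := by
      funext i
      rcases eq_or_ne i i0f with rfl | hne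
      · rw [Function.update_self]
        show splice (c x s) (b x) i = _
        rw [splice, dif_pos hp0, hc]
        simp only [hi0, if_true]
        rw [smul_inv_smul₀ htrne]
      · rw [Function.update_of_ne hne]
        show splice (c x s) (b x) i = splice d (b x) i
        by_cases hp : (i : ℕ) < j - 1
        · rw [splice, splice, dif_pos hp, dif_pos hp, hc, hddef]
          by_cases his : i ∈ s
          · have : (⟨i, hp⟩ : {i : Fin k // (i : ℕ) < j - 1}) ≠ i₀ := by
              rw [hi₀def]
              exact fun h => hne (congrArg Subtype.val h)
            simp [his, this]
          · simp [his]
        · rw [splice, splice, dif_neg hp, dif_neg hp]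
    have h2 : β (splice (c x s) (b x)) = (t₀ ^ r) • β Z := by
      rw [hid1, β.map_update_smul]
      congr 1
      rw [← hZi0, Function.update_eq_self]
    have h3 : β (splice d' (b x)) = (t₀ ^ r) • β Z := by
      have hYZ : splice d' (b x) = fun i => if i ∈ tset \ s then t₀ • Z i else Z i := by
        funext i
        by_cases hp : (i : ℕ) < j - 1
        · by_cases his : i ∈ s
          · have hnot : i ∉ tset \ s := fun h => (Finset.mem_sdiff.1 h).2 his
            rw [if_neg hnot, hZdef]
            show splice d' (b x) i = splice d (b x) i
            rw [splice, splice, dif_pos hp, dif_pos hp, hd'def, hddef]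
            simp [his]
          · have hin : i ∈ tset \ s :=
              Finset.mem_sdiff.2 ⟨Finset.mem_filter.2 ⟨Finset.mem_univ _, hp⟩, his⟩
            rw [if_pos hin, hZdef]
            show splice d' (b x) i = t₀ • splice d (b x) i
            rw [splice, splice, dif_pos hp, dif_pos hp, hd'def, hddef]
            simp [his]
        · have hnot : i ∉ tset \ s := fun h =>
            hp (Finset.mem_filter.1 (Finset.mem_sdiff.1 h).1).2
          rw [if_neg hnot, hZdef]
          show splice d' (b x) i = splice d (b x) i
          rw [splice, splice, dif_neg hp, dif_neg hp]
      rw [hYZ, aux_scale, ← hrdef]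
    have hd'mem : ∀ l, d' l ∈ Vc l := by
      intro l
      simp only [hd'def]
      by_cases his : (l : Fin k) ∈ s
      · by_cases hli : l = i₀
        · have hmem := hVc'sub l r hrk (hx l)
          rw [mem_smul_set_iff_inv_smul_mem₀ htrne] at hmem
          rw [if_pos his, if_pos hli]
          exact hmem
        · simp only [his, if_true, hli, if_false]
          exact hVc'sub0 l (hx l)
      · simp only [his, if_false]
        exact ht₀mem l
    have hfinal : β (splice d' (b x)) ∈ W₀ :=
      hVW d' (hVcV fun l _ => hd'mem l) (b x) ⟨x, hxK, rfl⟩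
    rw [h2, ← h3]
    exact hfinal
  -- assemble
  have hlim : Tendsto (fun x => g₁ x + rest x) (𝓝[K] x₀) (𝓝 (g₁ x₀ + 0)) :=
    ((hg₁.tendsto x₀).mono_left nhdsWithin_le_nhds).add hrest
  rw [add_zero] at hlim
  have heq : β (f x₀) = g₁ x₀ := by rw [hexp x₀, hrest0, add_zero]
  have hfin : Tendsto (fun x => β (f x)) (𝓝[K] x₀) (𝓝 (g₁ x₀)) :=
    hlim.congr fun x => (hexp x).symm
  show Tendsto (fun x => β (f x)) (𝓝[K] x₀) (𝓝 (β (f x₀)))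
  rw [heq]
  exact hfin
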